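/- Let Q be a field, φ : Q → Q a ring endomorphism, and d ≥ 1 an integer. Let R = Q^d with componentwise ring operations, and let σ : R → R be the ring endomorphism σ(z_0, …, z_{d−1}) = (φ(z_{d−1}), φ(z_0), …, φ(z_{d−2})). Let M be a finitely generated R-module equipped with a σ-semilinear endomorphism τ : M → M such that the R-span of τ(M) equals M. Then M is a free R-module. -/

import Mathlib

open Submodule Module
open Fin.NatCast Fin.CommRing

section Aux

variable {Q : Type*} [Field Q] {d : ℕ} [NeZero d]
variable {M : Type*} [AddCommGroup M] [Module (Fin d → Q) M]
  [Module Q M] [IsScalarTower Q (Fin d → Q) M] [Module.Finite Q M]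

theorem free_aux (φ : Q →+* Q) (σ : (Fin d → Q) →+* (Fin d → Q))
    (hσ : ∀ (z : Fin d → Q) (i : Fin d), σ z i = φ (z (i - 1)))
    (τ : M →ₛₗ[σ] M)
    (hspan : Submodule.span (Fin d → Q) (Set.range fun m : M => τ m) = ⊤) :
    Module.Free (Fin d → Q) M := by
  classical
  -- compatibility of the `Q`-action with the `R`-action
  have hQs : ∀ (q : Q) (m : M), q • m = (fun _ : Fin d => q) • m := by
    intro q m
    have h1 : (algebraMap Q (Fin d → Q) q) • m = q • m := algebraMap_smul (Fin d → Q) q m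
    have h2 : (algebraMap Q (Fin d → Q) q) = (fun _ : Fin d => q) := by
      funext j; simp
    rw [← h1, h2]
  -- the idempotents
  set e : Fin d → (Fin d → Q) := fun i => Pi.single i 1 with he
  have hee : ∀ i : Fin d, e i * e i = e i := by
    intro i; funext j
    by_cases h : j = i <;> simp [he, Pi.mul_apply, Pi.single_apply, h]
  have heij : ∀ i j : Fin d, i ≠ j → e i * e j = 0 := by
    intro i j hij; funext k
    simp only [he, Pi.mul_apply, Pi.single_apply, Pi.zero_apply]
    by_cases h1 : k = i
    · by_cases h2 : k = j
      · exact absurd (h1.symm.trans h2) hij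
      · simp [h1, h2, hij]
    · simp [h1]
  have hsum : ∑ i, e i = (1 : Fin d → Q) := by
    simpa [he] using Finset.univ_sum_single (1 : Fin d → Q)
  have hσe : ∀ i : Fin d, σ (e i) = e (i + 1) := by
    intro i; funext j
    rw [hσ]
    rcases eq_or_ne j (i + 1) with h | h
    · subst h
      simp [he, Pi.single_apply, add_sub_cancel_right]
    · have h' : j - 1 ≠ i := by
        intro hh
        apply h
        rw [← hh]
        exact (sub_add_cancel j 1).symm
      simp [he, Pi.single_apply, h, h']
  have hσc : ∀ q : Q, σ (fun _ : Fin d => q) = fun _ : Fin d => φ q := by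
    intro q; funext j; rw [hσ]
  have hτs : ∀ (q : Q) (m : M), τ (q • m) = φ q • τ m := by
    intro q m
    rw [hQs, τ.map_smulₛₗ, hσc, ← hQs]
  -- the component subspaces
  set Mi : Fin d → Submodule Q M := fun i =>
    { carrier := {m | e i • m = m}
      add_mem' := fun {a b} ha hb => by
        simp only [Set.mem_setOf_eq, smul_add] at *
        rw [ha, hb]
      zero_mem' := smul_zero _
      smul_mem' := fun q m hm => by
        simp only [Set.mem_setOf_eq] at *
        have hcomm : e i • ((fun _ : Fin d => q) • m)
            = (fun _ : Fin d => q) • (e i • m) := by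
          rw [← mul_smul, ← mul_smul, mul_comm]
        rw [hQs q m, hcomm, hm] } with hMidef
  have hMi : ∀ (i : Fin d) (m : M), m ∈ Mi i ↔ e i • m = m := fun i m => Iff.rfl
  have hmemMi : ∀ (i : Fin d) (m : M), e i • m ∈ Mi i := by
    intro i m
    rw [hMi, ← mul_smul, hee]
  have hτMi : ∀ (i : Fin d) (m : M), m ∈ Mi i → τ m ∈ Mi (i + 1) := by
    intro i m hm
    rw [hMi] at hm ⊢
    have h1 : τ (e i • m) = e (i + 1) • τ m := by rw [τ.map_smulₛₗ, hσe]
    rw [← h1, hm]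
  -- pushing spans through the semilinear map
  have hpush : ∀ (s : Set M) (m : M), m ∈ span Q s → τ m ∈ span Q (τ '' s) := by
    intro s m hm
    induction hm using Submodule.span_induction with
    | mem x hx => exact subset_span ⟨x, hx, rfl⟩
    | zero => simp
    | add x y _ _ hx hy => rw [map_add]; exact add_mem hx hy
    | smul q x _ hx => rw [hτs]; exact Submodule.smul_mem _ _ hx
  -- the key spanning property
  have hD : ∀ (i : Fin d) (m : M), m ∈ Mi (i + 1) → m ∈ span Q (τ '' (Mi i : Set M)) := by
    intro i m hm
    have hmem : m ∈ (⊤ : Submodule (Fin d → Q) M) := trivial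
    rw [← hspan] at hmem
    have key : ∀ y, y ∈ span (Fin d → Q) (Set.range fun m : M => τ m) →
        e (i + 1) • y ∈ span Q (τ '' (Mi i : Set M)) := by
      intro y hy
      induction hy using Submodule.span_induction with
      | mem x hx =>
        obtain ⟨z, rfl⟩ := hx
        have h1 : e (i + 1) • τ z = τ (e i • z) := by rw [τ.map_smulₛₗ, hσe]
        rw [h1]
        exact subset_span ⟨e i • z, hmemMi i z, rfl⟩
      | zero => simp
      | add x y _ _ hx hy => rw [smul_add]; exact add_mem hx hy
      | smul r x _ hx =>
        have h1 : e (i + 1) * r = (fun _ : Fin d => r (i + 1)) * e (i + 1) := by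
          funext j
          simp only [he, Pi.mul_apply, Pi.single_apply]
          by_cases h : j = i + 1 <;> simp [h]
        have h2 : e (i + 1) • r • x = (r (i + 1)) • (e (i + 1) • x) := by
          rw [← mul_smul, h1, mul_smul, ← hQs]
        rw [h2]
        exact Submodule.smul_mem _ _ hx
    rw [hMi] at hm
    rw [← hm]
    exact key m hmem
  -- the inductive spanning step
  have hstep : ∀ (i : Fin d) (k : ℕ) (w : Fin k → M),
      (∀ j, w j ∈ Mi i) → (Mi i ≤ span Q (Set.range w)) →
      (∀ j, τ (w j) ∈ Mi (i + 1)) ∧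
        (Mi (i + 1) ≤ span Q (Set.range fun j => τ (w j))) := by
    intro i k w hw hspanw
    refine ⟨fun j => hτMi i _ (hw j), ?_⟩
    intro m hm
    have himg : τ '' Set.range w = Set.range fun j => τ (w j) := by
      rw [← Set.range_comp]; rfl
    have h1 := hD i m hm
    have h2 : span Q (τ '' (Mi i : Set M)) ≤ span Q (Set.range fun j => τ (w j)) := by
      rw [Submodule.span_le]
      rintro x ⟨y, hy, rfl⟩
      have h3 : τ y ∈ span Q (τ '' Set.range w) := hpush _ y (hspanw hy)
      rwa [himg] at h3
    exact h2 h1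
  -- dimensions
  set n : Fin d → ℕ := fun i => finrank Q (Mi i) with hn
  have hbasis : ∀ i : Fin d, ∃ c : Fin (n i) → M,
      (∀ k, c k ∈ Mi i) ∧ Mi i ≤ span Q (Set.range c) ∧ LinearIndependent Q c := by
    intro i
    let b := Module.finBasis Q (Mi i)
    refine ⟨fun k => (b k : M), fun k => (b k).2, ?_, ?_⟩
    · have h2 : span Q (Set.range fun k => ((b k : M))) = Mi i := by
        have h3 := Submodule.map_span (Mi i).subtype (Set.range b)
        rw [b.span_eq, Submodule.map_subtype_top, ← Set.range_comp] at h3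
        exact h3.symm
      rw [h2]
    · exact b.linearIndependent.map' (Mi i).subtype (Submodule.ker_subtype _)
  have hdec : ∀ i : Fin d, n (i + 1) ≤ n i := by
    intro i
    obtain ⟨c, hc1, hc2, -⟩ := hbasis i
    obtain ⟨-, hsp⟩ := hstep i (n i) c hc1 hc2
    calc n (i + 1) = finrank Q (Mi (i + 1)) := rfl
      _ ≤ finrank Q (span Q (Set.range fun j => τ (c j))) := Submodule.finrank_mono hsp
      _ ≤ Fintype.card (Fin (n i)) := by
          simpa [Set.finrank] using finrank_range_le_card (fun j => τ (c j))
      _ = n i := Fintype.card_fin _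
  have hchain : ∀ (j : ℕ) (i : Fin d), n (i + (j : Fin d)) ≤ n i := by
    intro j
    induction j with
    | zero => simp
    | succ j ih =>
      intro i
      have h1 : i + ((j + 1 : ℕ) : Fin d) = (i + (j : Fin d)) + 1 := by push_cast; ring
      rw [h1]
      exact le_trans (hdec _) (ih i)
  have hconst : ∀ i : Fin d, n i = n 0 := by
    intro i
    have h1 : n i ≤ n 0 := by
      have := hchain i.val 0
      rwa [Fin.cast_val_eq_self, zero_add] at this
    have h2 : n 0 ≤ n i := by
      have h3 := hchain ((0 : Fin d) - i).val i
      have h4 : i + ((0 : Fin d) - i) = 0 := by ring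
      rwa [Fin.cast_val_eq_self, h4] at h3
    exact le_antisymm h1 h2
  -- the iterated families
  obtain ⟨c, hc1, hc2, -⟩ := hbasis 0
  set U : ℕ → Fin (n 0) → M := fun j k => τ^[j] (c k) with hU
  have hUs : ∀ j : ℕ, (∀ k, U j k ∈ Mi (j : Fin d)) ∧
      (Mi (j : Fin d) ≤ span Q (Set.range (U j))) := by
    intro j
    induction j with
    | zero =>
      constructor
      · intro k; simpa [hU] using hc1 k
      · simpa [hU] using hc2
    | succ j ih =>
      have hU1 : U (j + 1) = fun k => τ (U j k) := by
        funext k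
        exact Function.iterate_succ_apply' τ j (c k)
      have h1 := hstep (j : Fin d) (n 0) (U j) ih.1 ih.2
      have h2 : ((j + 1 : ℕ) : Fin d) = (j : Fin d) + 1 := by push_cast; ring
      rw [hU1, h2]
      exact h1
  have hUind : ∀ j : ℕ, LinearIndependent Q (U j) := by
    intro j
    rw [linearIndependent_iff_card_eq_finrank_span]
    have hsp : span Q (Set.range (U j)) = Mi (j : Fin d) := by
      refine le_antisymm ?_ (hUs j).2
      rw [Submodule.span_le]
      rintro x ⟨k, rfl⟩
      exact (hUs j).1 k
    show Fintype.card (Fin (n 0)) = finrank Q (span Q (Set.range (U j)))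
    rw [hsp, Fintype.card_fin]
    exact (hconst _).symm
  -- the candidate basis
  set v : Fin (n 0) → M := fun k => ∑ i : Fin d, U i.val k with hv
  have hUMi : ∀ (i : Fin d) (k : Fin (n 0)), U i.val k ∈ Mi i := by
    intro i k
    have := (hUs i.val).1 k
    rwa [Fin.cast_val_eq_self] at this
  have hev : ∀ (i : Fin d) (k : Fin (n 0)), e i • v k = U i.val k := by
    intro i k
    rw [hv]
    simp only
    rw [Finset.smul_sum, Finset.sum_eq_single i]
    · exact (hMi i _).1 (hUMi i k)
    · intro i' _ hne
      have h1 : U i'.val k = e i' • U i'.val k := ((hMi i' _).1 (hUMi i' k)).symm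
      rw [h1, ← mul_smul, heij i i' hne.symm, zero_smul]
    · intro h; exact absurd (Finset.mem_univ i) h
  have hspanR : ⊤ ≤ span (Fin d → Q) (Set.range v) := by
    intro m _
    have h1 : m = ∑ i : Fin d, e i • m := by
      rw [← Finset.sum_smul, hsum, one_smul]
    rw [h1]
    refine Submodule.sum_mem _ fun i _ => ?_
    have h2 : e i • m ∈ Mi i := hmemMi i m
    have h3 : e i • m ∈ span Q (Set.range (U i.val)) := by
      have h4 := (hUs i.val).2
      rw [Fin.cast_val_eq_self] at h4
      exact h4 h2
    have h5 : span Q (Set.range (U i.val)) ≤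
        Submodule.restrictScalars Q (span (Fin d → Q) (Set.range v)) := by
      rw [Submodule.span_le]
      rintro x ⟨k, rfl⟩
      show U i.val k ∈ span (Fin d → Q) (Set.range v)
      rw [← hev i k]
      exact Submodule.smul_mem _ _ (subset_span ⟨k, rfl⟩)
    exact h5 h3
  have hind : LinearIndependent (Fin d → Q) v := by
    rw [Fintype.linearIndependent_iff]
    intro g hg k
    funext i
    have h5 : ∑ k, (g k i) • U i.val k = 0 := by
      have h6 := congrArg (fun m : M => e i • m) hg
      simp only [smul_zero] at h6
      rw [Finset.smul_sum] at h6
      calc ∑ k, (g k i) • U i.val k = ∑ k, e i • (g k • v k) := by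
            refine Finset.sum_congr rfl fun k _ => ?_
            have h7 : e i * g k = (fun _ : Fin d => g k i) * e i := by
              funext j
              simp only [he, Pi.mul_apply, Pi.single_apply]
              by_cases h : j = i <;> simp [h]
            rw [← mul_smul, h7, mul_smul, ← hQs, hev]
        _ = 0 := h6
    have h8 := Fintype.linearIndependent_iff.1 (hUind i.val) (fun k => g k i) h5
    exact h8 k
  exact Module.Free.of_basis (Basis.mk hind hspanR)

end Aux

/-- **Restricted modules over `Q^d` with a transitive twist are free** (Lemma 3.9(b)).
Let `Q` be a field, `φ : Q → Q` a ring endomorphism and `d ≥ 1`.  Let `R = Q^d` and let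
`σ : R → R` be the ring endomorphism `σ(z_0, …, z_{d-1}) = (φ(z_{d-1}), φ(z_0), …, φ(z_{d-2}))`
(which permutes the `d` factor fields transitively).  If `M` is a finitely generated
`R`-module with a `σ`-semilinear endomorphism `τ` whose image spans `M` over `R`, then `M`
is a free `R`-module. -/
theorem stmt14 {Q : Type*} [Field Q] (φ : Q →+* Q) (d : ℕ) [NeZero d]
    {M : Type*} [AddCommGroup M] [Module (Fin d → Q) M] [Module.Finite (Fin d → Q) M]
    (σ : (Fin d → Q) →+* (Fin d → Q))
    (hσ : ∀ (z : Fin d → Q) (i : Fin d), σ z i = φ (z (i - 1)))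
    (τ : M →ₛₗ[σ] M)
    (hspan : Submodule.span (Fin d → Q) (Set.range fun m : M => τ m) = ⊤) :
    Module.Free (Fin d → Q) M := by
  letI : Module Q M := Module.compHom M (algebraMap Q (Fin d → Q))
  haveI : IsScalarTower Q (Fin d → Q) M :=
    ⟨fun q r m => by
      show (q • r) • m = (algebraMap Q (Fin d → Q) q) • (r • m)
      rw [Algebra.smul_def, mul_smul]⟩
  haveI : Module.Finite Q M := Module.Finite.trans (Fin d → Q) M
  exact free_aux φ σ hσ τ hspan
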